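/- There exist absolute constants c₁, c₂, C > 0 such that the following holds. Let X be a finite data domain and A : X^n → T an (ε,δ)-differentially private algorithm, and let X ~ P^n for a distribution P over X. If ε ∈ (0, 1/2], ε ≥ c₁/√n, and δ ≤ c₂·ε/n², then the mutual information satisfies I(X; A(X)) ≤ C·( n·ε² + n·√(δ/ε)·( 1 + ln( (1/n)·√(ε/δ) ) + n·log₂|X| ) ). -/

import Mathlib

open scoped ENNReal

/-- The probability that a sample from the probability mass function `μ` lands in `S`. -/
noncomputable def prob {α : Type*} (μ : PMF α) (S : Set α) : ℝ :=
  (μ.toOuterMeasure S).toReal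

/-- The independent coupling of two distributions: a pair whose components are independent
with the given marginal distributions. -/
noncomputable def indepPair {α β : Type*} (p : PMF α) (q : PMF β) : PMF (α × β) :=
  p.bind fun a => q.map fun b => (a, b)

/-- `MaxInfoLe μ b k` : the `b`-approximate max-information of the joint distribution `μ`
is at most `k` (measured in bits):  for every event `O` with `Pr[(X,Z) ∈ O] > b`,
`Pr[(X,Z) ∈ O] - b ≤ 2^k · Pr[X ⊗ Z ∈ O]`. -/
def MaxInfoLe {α β : Type*} (μ : PMF (α × β)) (b k : ℝ) : Prop :=
  ∀ O : Set (α × β), b < prob μ O →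
    prob μ O - b ≤ 2 ^ k * prob (indepPair (μ.map Prod.fst) (μ.map Prod.snd)) O

/-- The `n`-fold product (i.i.d.) distribution `P^n` on datasets of size `n`. -/
noncomputable def iidPMF {X : Type*} (P : PMF X) : (n : ℕ) → PMF (Fin n → X)
  | 0 => PMF.pure (fun i => i.elim0)
  | n + 1 => P.bind fun a => (iidPMF P n).map fun x => Fin.cons a x

/-- The joint distribution of `(X, A(X))` where `X ∼ μ` and `A` is a randomized algorithm. -/
noncomputable def jointPMF {D Y : Type*} (μ : PMF D) (A : D → PMF Y) : PMF (D × Y) :=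
  μ.bind fun x => (A x).map fun y => (x, y)
/-- Two datasets are neighboring if they differ in at most one entry. -/
def Neighbor {X : Type*} {n : ℕ} (x x' : Fin n → X) : Prop :=
  ∃ i : Fin n, ∀ j : Fin n, j ≠ i → x j = x' j

/-- `(ε,δ)`-differential privacy of a randomized algorithm `A` on datasets of size `n`. -/
def DiffPrivate {X Y : Type*} {n : ℕ} (A : (Fin n → X) → PMF Y) (ε δ : ℝ) : Prop :=
  ∀ x x' : Fin n → X, Neighbor x x' → ∀ O : Set Y,
    prob (A x) O ≤ Real.exp ε * prob (A x') O + δ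

/-- The mutual information, measured in nats, between the two components of a joint
distribution `μ`. -/
noncomputable def mutualInfoNats {α β : Type*} (μ : PMF (α × β)) : ℝ :=
  ∑' q : α × β, (μ q).toReal *
    Real.log ((μ q).toReal / (((μ.map Prod.fst) q.1).toReal * ((μ.map Prod.snd) q.2).toReal))


namespace DPMI

open Real

variable {T : Type*} {α : Type*}

/-- Real-valued mass function of a PMF. -/
noncomputable def rp (μ : PMF T) (y : T) : ℝ := (μ y).toReal

lemma rp_nonneg (μ : PMF T) (y : T) : 0 ≤ rp μ y := ENNReal.toReal_nonneg

lemma rp_le_one (μ : PMF T) (y : T) : rp μ y ≤ 1 := by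
  have := μ.coe_le_one y
  simpa [rp] using ENNReal.toReal_le_of_le_ofReal one_pos.le (by simpa using this)

lemma summable_rp (μ : PMF T) : Summable (rp μ) :=
  ENNReal.summable_toReal (by simp [PMF.tsum_coe])

lemma tsum_rp (μ : PMF T) : ∑' y, rp μ y = 1 := by
  have h : (∑' y, μ y).toReal = ∑' y, (μ y).toReal :=
    ENNReal.tsum_toReal_eq fun a => PMF.apply_ne_top μ a
  simp only [PMF.tsum_coe] at h
  simpa [rp] using h.symm

lemma prob_eq_tsum (μ : PMF T) (S : Set T) :
    prob μ S = ∑' y, S.indicator (rp μ) y := by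
  rw [prob, PMF.toOuterMeasure_apply]
  rw [ENNReal.tsum_toReal_eq]
  · refine tsum_congr fun y => ?_
    by_cases hy : y ∈ S <;> simp [Set.indicator_apply, hy, rp]
  · intro a
    by_cases hy : a ∈ S <;> simp [Set.indicator_apply, hy, PMF.apply_ne_top]

lemma prob_nonneg (μ : PMF T) (S : Set T) : 0 ≤ prob μ S := ENNReal.toReal_nonneg


section Bind

variable [Fintype α]

lemma rp_bind (P : PMF α) (ν : α → PMF T) (y : T) :
    rp (P.bind ν) y = ∑ a, rp P a * rp (ν a) y := by
  rw [rp, PMF.bind_apply, tsum_fintype, ENNReal.toReal_sum (fun a _ => ?_)]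
  · exact Finset.sum_congr rfl fun a _ => ENNReal.toReal_mul
  · exact ENNReal.mul_ne_top (PMF.apply_ne_top _ _) (PMF.apply_ne_top _ _)

lemma prob_bind (P : PMF α) (ν : α → PMF T) (S : Set T) :
    prob (P.bind ν) S = ∑ a, rp P a * prob (ν a) S := by
  rw [prob, PMF.toOuterMeasure_bind_apply, tsum_fintype, ENNReal.toReal_sum (fun a _ => ?_)]
  · refine Finset.sum_congr rfl fun a _ => ?_
    rw [ENNReal.toReal_mul]; rfl
  · exact ENNReal.mul_ne_top (PMF.apply_ne_top _ _)
      (by rw [PMF.toOuterMeasure_apply]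
          exact ne_top_of_le_ne_top (by simp [PMF.tsum_coe]) (ENNReal.tsum_le_tsum
            (fun x => Set.indicator_apply_le fun _ => le_rfl)))

lemma sum_rp (P : PMF α) : ∑ a, rp P a = 1 := by
  rw [← tsum_fintype (L := SummationFilter.unconditional α)]; exact tsum_rp P

lemma rp_bind_ge (P : PMF α) (ν : α → PMF T) (a : α) (y : T) :
    rp P a * rp (ν a) y ≤ rp (P.bind ν) y := by
  rw [rp_bind]
  exact Finset.single_le_sum (f := fun b => rp P b * rp (ν b) y)
    (fun b _ => mul_nonneg (rp_nonneg _ _) (rp_nonneg _ _)) (Finset.mem_univ a)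

end Bind

section KL

lemma klterm_le (p q w : ℝ) (hp : 0 ≤ p) (hw : 0 < w) (hw1 : w ≤ 1) (h : w * p ≤ q) :
    p * Real.log (p / q) ≤ p * Real.log (1 / w) := by
  rcases eq_or_lt_of_le hp with hp0 | hp0
  · simp [← hp0]
  · have hq : 0 < q := lt_of_lt_of_le (by positivity) h
    have hr : p / q ≤ 1 / w := by
      rw [div_le_div_iff₀ hq hw]
      nlinarith
    exact mul_le_mul_of_nonneg_left (Real.log_le_log (by positivity) hr) hp

lemma klterm_ge (p q : ℝ) (hp : 0 ≤ p) (hq : 0 ≤ q) (hpq : 0 < p → 0 < q) :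
    p - q ≤ p * Real.log (p / q) := by
  rcases eq_or_lt_of_le hp with hp0 | hp0
  · simp [← hp0, hq]
  · have hq : 0 < q := hpq hp0
    have h1 : Real.log (q / p) ≤ q / p - 1 := Real.log_le_sub_one_of_pos (by positivity)
    have h2 : Real.log (p / q) = -Real.log (q / p) := by
      rw [← Real.log_inv]; congr 1; field_simp
    have h3 : p * Real.log (q / p) ≤ p * (q / p - 1) := mul_le_mul_of_nonneg_left h1 hp
    have h4 : p * (q / p - 1) = q - p := by field_simp
    rw [h2, mul_neg]; linarith

lemma klterm_summable {p q : T → ℝ} {w : ℝ} (hp : Summable p) (hq : Summable q)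
    (hpn : ∀ y, 0 ≤ p y) (hqn : ∀ y, 0 ≤ q y) (hw : 0 < w) (hw1 : w ≤ 1)
    (h : ∀ y, w * p y ≤ q y) :
    Summable (fun y => p y * Real.log (p y / q y)) := by
  have hlw : 0 ≤ Real.log (1 / w) := Real.log_nonneg (by rw [le_div_iff₀ hw]; linarith)
  refine Summable.of_abs (Summable.of_nonneg_of_le (fun y => abs_nonneg _) (fun y => ?_)
    ((hp.mul_right (Real.log (1 / w))).add hq))
  rw [abs_le]
  constructor
  · have h1 : p y - q y ≤ p y * Real.log (p y / q y) :=
      klterm_ge _ _ (hpn y) (hqn y) (fun hpy => lt_of_lt_of_le (mul_pos hw hpy) (h y))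
    have h2 : 0 ≤ p y * Real.log (1 / w) := mul_nonneg (hpn y) hlw
    linarith [hpn y]
  · have := klterm_le (p y) (q y) w (hpn y) hw hw1 (h y)
    linarith [hqn y]

lemma tsum_split {g : T → ℝ} (hg : Summable g) (S : Set T) :
    ∑' y, g y = (∑' y, S.indicator g y) + ∑' y, Sᶜ.indicator g y := by
  rw [← Summable.tsum_add (hg.indicator S) (hg.indicator Sᶜ)]
  refine tsum_congr fun y => ?_
  have := congrFun (Set.indicator_self_add_compl S g) y
  simpa [Pi.add_apply] using this.symm

end KL


section PosPart

lemma tsum_posPart_le {p q : T → ℝ} (hp : Summable p) (hq : Summable q)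
    {c δ : ℝ}
    (hev : ∀ O : Set T, (∑' y, O.indicator p y) ≤ c * (∑' y, O.indicator q y) + δ) :
    ∑' y, max (p y - c * q y) 0 ≤ δ := by
  classical
  set O : Set T := {y | c * q y < p y} with hO
  have hfun : ∀ y, max (p y - c * q y) 0 = O.indicator p y - c * O.indicator q y := by
    intro y
    by_cases hy : y ∈ O
    · have h1 : c * q y < p y := hy
      simp [Set.indicator_of_mem hy, max_eq_left (by linarith : (0:ℝ) ≤ p y - c * q y)]
    · have h1 : ¬ (c * q y < p y) := hy
      push_neg at h1
      simp [Set.indicator_of_notMem hy, max_eq_right (by linarith : p y - c * q y ≤ (0:ℝ))]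
  calc ∑' y, max (p y - c * q y) 0
      = ∑' y, (O.indicator p y - c * O.indicator q y) := tsum_congr hfun
    _ = (∑' y, O.indicator p y) - ∑' y, c * O.indicator q y :=
        Summable.tsum_sub (hp.indicator O) ((hq.indicator O).mul_left c)
    _ = (∑' y, O.indicator p y) - c * ∑' y, O.indicator q y := by rw [tsum_mul_left]
    _ ≤ δ := by have := hev O; linarith

lemma posPart_nonneg (x : ℝ) : 0 ≤ max x 0 := le_max_right _ _

lemma summable_posPart {p q : T → ℝ} (hq : Summable q) (hqn : ∀ y, 0 ≤ q y)
    {c : ℝ} (hc : 0 ≤ c) (hpn : ∀ y, 0 ≤ p y) :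
    Summable (fun y => max (q y - c * p y) 0) := by
  refine Summable.of_nonneg_of_le (fun y => posPart_nonneg _) (fun y => ?_) hq
  have h1 : q y - c * p y ≤ q y := by nlinarith [hpn y]
  exact max_le h1 (hqn y)

end PosPart

section Entropy

lemma entropy_le {β : Type*} [Fintype β] (w : β → ℝ) (h0 : ∀ a, 0 ≤ w a)
    (h1 : ∑ a, w a = 1) :
    ∑ a, w a * Real.log (1 / w a) ≤ Real.log (Fintype.card β) := by
  classical
  set N : ℝ := (Fintype.card β : ℝ) with hN
  have hNpos : 0 < N := by
    rcases Nat.eq_zero_or_pos (Fintype.card β) with h | h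
    · exfalso
      have : IsEmpty β := Fintype.card_eq_zero_iff.mp h
      rw [Finset.univ_eq_empty, Finset.sum_empty] at h1
      norm_num at h1
    · rw [hN]; exact_mod_cast h
  set s : Finset β := Finset.univ.filter (fun a => 0 < w a) with hs
  have houter : ∀ a ∈ Finset.univ, a ∉ s → w a * Real.log (1 / w a) = 0 := by
    intro a _ ha
    have : ¬ (0 < w a) := by simpa [hs] using ha
    have : w a = 0 := le_antisymm (not_lt.mp this) (h0 a)
    simp [this]
  have houter' : ∀ a ∈ Finset.univ, a ∉ s → w a = 0 := by
    intro a _ ha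
    have : ¬ (0 < w a) := by simpa [hs] using ha
    exact le_antisymm (not_lt.mp this) (h0 a)
  have hsum_s : ∑ a ∈ s, w a = 1 := by
    rw [← h1]
    exact Finset.sum_subset (Finset.filter_subset _ _) houter'
  have hterm : ∀ a ∈ s, w a * Real.log (1 / w a) ≤ w a * Real.log N + (1 / N - w a) := by
    intro a ha
    have hw : 0 < w a := (Finset.mem_filter.mp ha).2
    have hlog : Real.log (1 / w a) = Real.log N + Real.log (1 / (w a * N)) := by
      rw [← Real.log_mul (ne_of_gt hNpos) (by positivity)]
      congr 1
      field_simp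
    rw [hlog, mul_add]
    have h2 : Real.log (1 / (w a * N)) ≤ 1 / (w a * N) - 1 :=
      Real.log_le_sub_one_of_pos (by positivity)
    have h3 : w a * Real.log (1 / (w a * N)) ≤ w a * (1 / (w a * N) - 1) :=
      mul_le_mul_of_nonneg_left h2 hw.le
    have h4 : w a * (1 / (w a * N) - 1) = 1 / N - w a := by
      field_simp
    linarith
  calc ∑ a, w a * Real.log (1 / w a)
      = ∑ a ∈ s, w a * Real.log (1 / w a) :=
        (Finset.sum_subset (Finset.filter_subset _ _) houter).symm
    _ ≤ ∑ a ∈ s, (w a * Real.log N + (1 / N - w a)) := Finset.sum_le_sum hterm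
    _ = (∑ a ∈ s, w a) * Real.log N + ((s.card : ℝ) / N - ∑ a ∈ s, w a) := by
        rw [Finset.sum_add_distrib, ← Finset.sum_mul, Finset.sum_sub_distrib]
        simp [Finset.sum_const, div_eq_mul_inv, mul_comm]
    _ ≤ Real.log N := by
        rw [hsum_s, one_mul]
        have hcard : (s.card : ℝ) ≤ N := by
          rw [hN]
          exact_mod_cast Finset.card_le_card (Finset.subset_univ s) |>.trans
            (le_of_eq (Finset.card_univ))
        have : (s.card : ℝ) / N ≤ 1 := by
          rw [div_le_one hNpos]; exact hcard
        linarith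

end Entropy

section Consts

lemma exp_le_three {x : ℝ} (hx : x ≤ 1) : Real.exp x ≤ 3 :=
  le_trans (Real.exp_le_exp.mpr hx) (le_of_lt (lt_trans Real.exp_one_lt_d9 (by norm_num)))

lemma exp_sub_one_le {x : ℝ} (hx : 0 ≤ x) : Real.exp x - 1 ≤ x * Real.exp x := by
  have h := Real.add_one_le_exp (-x)
  have hmul : Real.exp (-x) * Real.exp x = 1 := by rw [← Real.exp_add]; simp
  nlinarith [Real.exp_pos x]

lemma exp_neg_le {x : ℝ} (hx : 0 ≤ x) : Real.exp (-x) ≤ 1 / (1 + x) := by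
  have h := Real.add_one_le_exp x
  have hmul : Real.exp (-x) * Real.exp x = 1 := by rw [← Real.exp_add]; simp
  rw [le_div_iff₀ (by linarith : (0:ℝ) < 1 + x)]
  nlinarith [Real.exp_pos x, Real.exp_pos (-x)]

end Consts

section Mix

variable [Fintype α]

lemma prob_close_mix_left (P : PMF α) (ν : α → PMF T) {ε δ : ℝ}
    (hDP : ∀ a b : α, ∀ O : Set T, prob (ν a) O ≤ Real.exp ε * prob (ν b) O + δ)
    (a : α) (O : Set T) :
    prob (ν a) O ≤ Real.exp ε * prob (P.bind ν) O + δ := by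
  have hs := sum_rp P
  calc prob (ν a) O = ∑ b, rp P b * prob (ν a) O := by rw [← Finset.sum_mul, hs, one_mul]
    _ ≤ ∑ b, rp P b * (Real.exp ε * prob (ν b) O + δ) :=
        Finset.sum_le_sum fun b _ => mul_le_mul_of_nonneg_left (hDP a b O) (rp_nonneg _ _)
    _ = Real.exp ε * (∑ b, rp P b * prob (ν b) O) + (∑ b, rp P b) * δ := by
        rw [Finset.mul_sum, Finset.sum_mul, ← Finset.sum_add_distrib]
        exact Finset.sum_congr rfl fun b _ => by ring
    _ = Real.exp ε * prob (P.bind ν) O + δ := by rw [prob_bind, hs, one_mul]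

lemma prob_close_mix_right (P : PMF α) (ν : α → PMF T) {ε δ : ℝ}
    (hDP : ∀ a b : α, ∀ O : Set T, prob (ν a) O ≤ Real.exp ε * prob (ν b) O + δ)
    (a : α) (O : Set T) :
    prob (P.bind ν) O ≤ Real.exp ε * prob (ν a) O + δ := by
  have hs := sum_rp P
  calc prob (P.bind ν) O = ∑ b, rp P b * prob (ν b) O := prob_bind P ν O
    _ ≤ ∑ b, rp P b * (Real.exp ε * prob (ν a) O + δ) :=
        Finset.sum_le_sum fun b _ => mul_le_mul_of_nonneg_left (hDP b a O) (rp_nonneg _ _)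
    _ = (∑ b, rp P b) * (Real.exp ε * prob (ν a) O + δ) := by rw [Finset.sum_mul]
    _ = Real.exp ε * prob (ν a) O + δ := by rw [hs, one_mul]

end Mix


section CoreAux

set_option maxHeartbeats 1000000 in
/-- The heart of the argument: a KL divergence bound between `(ε,δ)`-indistinguishable
distributions, one of which dominates a `w`-fraction of the other. -/
lemma kl_bound_aux {p q : T → ℝ} {w ε δ : ℝ}
    (hps : Summable p) (hqs : Summable q) (hpn : ∀ y, 0 ≤ p y) (hqn : ∀ y, 0 ≤ q y)
    (hp1 : ∑' y, p y = 1) (hq1 : ∑' y, q y = 1)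
    (hw : 0 < w) (hw1 : w ≤ 1) (hge : ∀ y, w * p y ≤ q y)
    (hε : 0 < ε) (hε2 : ε ≤ 1/2) (hδ : 0 ≤ δ)
    (he1 : ∀ O : Set T, (∑' y, O.indicator p y) ≤ Real.exp ε * (∑' y, O.indicator q y) + δ)
    (he2 : ∀ O : Set T, (∑' y, O.indicator q y) ≤ Real.exp ε * (∑' y, O.indicator p y) + δ) :
    ∑' y, p y * Real.log (p y / q y) ≤ 72*ε^2 + 2*δ + (3/2)*(δ/ε) * Real.log (1/w) := by
  classical
  have hexpε : 0 ≤ Real.exp ε := (Real.exp_pos ε).le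
  have hkls : Summable (fun y => p y * Real.log (p y / q y)) :=
    klterm_summable hps hqs hpn hqn hw hw1 hge
  have hsδ : ∑' y, max (p y - Real.exp ε * q y) 0 ≤ δ := tsum_posPart_le hps hqs he1
  have htδ : ∑' y, max (q y - Real.exp ε * p y) 0 ≤ δ := tsum_posPart_le hqs hps he2
  have hts : Summable (fun y => max (q y - Real.exp ε * p y) 0) :=
    summable_posPart hqs hqn hexpε hpn
  have hss : Summable (fun y => max (p y - Real.exp ε * q y) 0) :=
    summable_posPart hps hpn hexpε hqn
  have htn : ∀ y, 0 ≤ max (q y - Real.exp ε * p y) 0 := fun y => posPart_nonneg _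
  have htq : ∀ y, max (q y - Real.exp ε * p y) 0 ≤ q y := fun y =>
    max_le (by nlinarith [hpn y, Real.exp_pos ε]) (hqn y)
  set B : Set T := {y | Real.exp (2*ε) * q y < p y} with hBdef
  set kl : T → ℝ := fun y => p y * Real.log (p y / q y) with hkldef
  have hsplit : ∑' y, kl y = (∑' y, B.indicator kl y) + ∑' y, Bᶜ.indicator kl y :=
    tsum_split hkls B
  -- B part
  have hBp : ∀ y, B.indicator p y ≤ (3/(2*ε)) * max (p y - Real.exp ε * q y) 0 := by
    intro y
    by_cases hy : y ∈ B
    · have hyB : Real.exp (2*ε) * q y < p y := hy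
      have hppos : 0 < p y := lt_of_le_of_lt (mul_nonneg (Real.exp_pos _).le (hqn y)) hyB
      have hid : Real.exp (-ε) * Real.exp (2*ε) = Real.exp ε := by
        rw [← Real.exp_add]; ring_nf
      have h1 : Real.exp ε * q y ≤ Real.exp (-ε) * p y := by
        calc Real.exp ε * q y = Real.exp (-ε) * (Real.exp (2*ε) * q y) := by
              rw [← mul_assoc, hid]
          _ ≤ Real.exp (-ε) * p y :=
              mul_le_mul_of_nonneg_left hyB.le (Real.exp_pos _).le
      have hne : Real.exp (-ε) ≤ 1/(1+ε) := exp_neg_le hε.le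
      have h1e : (1:ℝ)/(1+ε) ≤ 1 - (2/3)*ε := by
        rw [div_le_iff₀ (by linarith : (0:ℝ) < 1+ε)]
        nlinarith
      have hkey : (2/3)*ε * p y ≤ p y - Real.exp ε * q y := by nlinarith
      have hmax : (2/3)*ε * p y ≤ max (p y - Real.exp ε * q y) 0 :=
        le_trans hkey (le_max_left _ _)
      rw [Set.indicator_of_mem hy]
      calc p y = (3/(2*ε)) * ((2/3)*ε * p y) := by field_simp
        _ ≤ (3/(2*ε)) * max (p y - Real.exp ε * q y) 0 :=
            mul_le_mul_of_nonneg_left hmax (div_nonneg (by norm_num) (by linarith))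
    · rw [Set.indicator_of_notMem hy]
      exact mul_nonneg (div_nonneg (by norm_num) (by linarith)) (posPart_nonneg _)
  have hBkl : ∀ y, B.indicator kl y ≤ Real.log (1/w) * B.indicator p y := by
    intro y
    by_cases hy : y ∈ B
    · rw [Set.indicator_of_mem hy, Set.indicator_of_mem hy, mul_comm]
      exact klterm_le (p y) (q y) w (hpn y) hw hw1 (hge y)
    · rw [Set.indicator_of_notMem hy, Set.indicator_of_notMem hy]
      simp
  have hlw : 0 ≤ Real.log (1/w) := Real.log_nonneg (by rw [le_div_iff₀ hw]; linarith)
  have hBsum : ∑' y, B.indicator kl y ≤ Real.log (1/w) * ((3/(2*ε)) * δ) := by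
    have s1 : ∑' y, B.indicator kl y ≤ ∑' y, Real.log (1/w) * B.indicator p y :=
      Summable.tsum_le_tsum hBkl (hkls.indicator B) ((hps.indicator B).mul_left _)
    rw [tsum_mul_left] at s1
    have s3 : ∑' y, B.indicator p y ≤
        ∑' y, (3/(2*ε)) * max (p y - Real.exp ε * q y) 0 :=
      Summable.tsum_le_tsum hBp (hps.indicator B) (hss.mul_left _)
    rw [tsum_mul_left] at s3
    have s4 : (3/(2*ε)) * (∑' y, max (p y - Real.exp ε * q y) 0) ≤ (3/(2*ε)) * δ :=
      mul_le_mul_of_nonneg_left hsδ (by positivity)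
    have s5 : Real.log (1/w) * (∑' y, B.indicator p y) ≤ Real.log (1/w) * ((3/(2*ε)) * δ) :=
      mul_le_mul_of_nonneg_left (le_trans s3 s4) hlw
    linarith
  -- G part
  have hGkl : ∀ y, Bᶜ.indicator kl y ≤
      (p y - q y) + (72*ε^2 * q y + 2 * max (q y - Real.exp ε * p y) 0) := by
    intro y
    by_cases hy : y ∈ Bᶜ
    · rw [Set.indicator_of_mem hy]
      have hyG : p y ≤ Real.exp (2*ε) * q y := not_lt.mp hy
      rcases eq_or_lt_of_le (hpn y) with hp0 | hp0
      · have hkl0 : kl y = 0 := by simp [hkldef, ← hp0]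
        have ht0 : max (q y - Real.exp ε * p y) 0 = q y := by
          rw [← hp0]
          simp [max_eq_left (hqn y)]
        rw [hkl0, ht0, ← hp0]
        nlinarith [hqn y, sq_nonneg ε]
      · have hq0 : 0 < q y := lt_of_lt_of_le (mul_pos hw hp0) (hge y)
        have hlog : Real.log (p y / q y) ≤ p y / q y - 1 :=
          Real.log_le_sub_one_of_pos (by positivity)
        have hkl1 : kl y ≤ (p y - q y) + (p y - q y)^2 / q y := by
          have hident : p y * (p y / q y - 1) = (p y - q y) + (p y - q y)^2 / q y := by
            field_simp
            ring
          calc kl y ≤ p y * (p y / q y - 1) := mul_le_mul_of_nonneg_left hlog hp0.le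
            _ = _ := hident
        have h2 : Real.exp ε - 1 ≤ 3*ε := by
          have hb := exp_sub_one_le hε.le
          have h3 : Real.exp ε ≤ 3 := exp_le_three (by linarith)
          nlinarith
        have h4 : Real.exp (2*ε) - 1 ≤ 6*ε := by
          have hb := exp_sub_one_le (show (0:ℝ) ≤ 2*ε by linarith)
          have h5 : Real.exp (2*ε) ≤ 3 := exp_le_three (by linarith)
          nlinarith
        set m : ℝ := max (q y - Real.exp ε * p y) 0 with hm
        have hmn : 0 ≤ m := htn y
        have hmq : m ≤ q y := htq y
        have hm1 : q y - Real.exp ε * p y ≤ m := le_max_left _ _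
        have habs : |p y - q y| ≤ 6*ε*q y + m := by
          rw [abs_le]
          constructor
          · rcases le_or_gt (p y) (q y) with hc | hc
            · nlinarith [hpn y]
            · nlinarith [hqn y]
          · nlinarith [hqn y]
        have h6 : (p y - q y)^2 ≤ (6*ε*q y + m)^2 :=
          sq_le_sq' (neg_le_of_abs_le habs) (le_of_abs_le habs)
        have hsq : (p y - q y)^2 ≤ (72*ε^2*q y + 2*m) * q y := by
          nlinarith [sq_nonneg (6*ε*q y - m), mul_le_mul_of_nonneg_left hmq hmn]
        have hdiv : (p y - q y)^2 / q y ≤ 72*ε^2*q y + 2*m := by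
          rw [div_le_iff₀ hq0]
          exact hsq
        linarith
    · rw [Set.indicator_of_notMem hy]
      have hyB : Real.exp (2*ε) * q y < p y := not_not.mp (by simpa [Set.mem_compl_iff, hBdef] using hy)
      have hq_le : q y ≤ p y := by
        nlinarith [Real.one_le_exp (show (0:ℝ) ≤ 2*ε by linarith), hqn y]
      nlinarith [htn y, hqn y, sq_nonneg ε]
  have hGsummand : Summable (fun y =>
      (p y - q y) + (72*ε^2 * q y + 2 * max (q y - Real.exp ε * p y) 0)) :=
    (hps.sub hqs).add ((hqs.mul_left _).add (hts.mul_left 2))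
  have hGsum : ∑' y, Bᶜ.indicator kl y ≤ 72*ε^2 + 2*δ := by
    have s1 : ∑' y, Bᶜ.indicator kl y ≤
        ∑' y, ((p y - q y) + (72*ε^2 * q y + 2 * max (q y - Real.exp ε * p y) 0)) :=
      Summable.tsum_le_tsum hGkl (hkls.indicator _) hGsummand
    have s2 : ∑' y, ((p y - q y) + (72*ε^2 * q y + 2 * max (q y - Real.exp ε * p y) 0)) =
        ((∑' y, p y) - ∑' y, q y) +
          (72*ε^2 * (∑' y, q y) + 2 * ∑' y, max (q y - Real.exp ε * p y) 0) := by
      rw [Summable.tsum_add (hps.sub hqs) ((hqs.mul_left _).add (hts.mul_left 2)),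
          Summable.tsum_sub hps hqs, Summable.tsum_add (hqs.mul_left _) (hts.mul_left 2),
          tsum_mul_left, tsum_mul_left]
    rw [s2, hp1, hq1] at s1
    linarith
  have hfinal : Real.log (1/w) * ((3/(2*ε)) * δ) = (3/2)*(δ/ε) * Real.log (1/w) := by
    field_simp
  calc ∑' y, p y * Real.log (p y / q y) = ∑' y, kl y := rfl
    _ = (∑' y, B.indicator kl y) + ∑' y, Bᶜ.indicator kl y := hsplit
    _ ≤ 72*ε^2 + 2*δ + (3/2)*(δ/ε) * Real.log (1/w) := by
        rw [← hfinal]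
        linarith

end CoreAux


section Core

variable [Fintype α]

lemma core (P : PMF α) (ν : α → PMF T) {ε δ : ℝ}
    (hε : 0 < ε) (hε2 : ε ≤ 1/2) (hδ : 0 ≤ δ)
    (hDP : ∀ a b : α, ∀ O : Set T, prob (ν a) O ≤ Real.exp ε * prob (ν b) O + δ) :
    ∑ a, rp P a * (∑' y, rp (ν a) y * Real.log (rp (ν a) y / rp (P.bind ν) y)) ≤
      72 * ε^2 + 2*δ + (3/2) * (δ/ε) * Real.log (Fintype.card α) := by
  have key : ∀ a : α, 0 < rp P a →
      (∑' y, rp (ν a) y * Real.log (rp (ν a) y / rp (P.bind ν) y)) ≤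
        72*ε^2 + 2*δ + (3/2)*(δ/ε) * Real.log (1 / rp P a) := by
    intro a hw
    refine kl_bound_aux (summable_rp _) (summable_rp _) (rp_nonneg _) (rp_nonneg _)
      (tsum_rp _) (tsum_rp _) hw (rp_le_one _ _) (fun y => rp_bind_ge P ν a y) hε hε2 hδ ?_ ?_
    · intro O
      have h := prob_close_mix_left P ν hDP a O
      rwa [prob_eq_tsum, prob_eq_tsum] at h
    · intro O
      have h := prob_close_mix_right P ν hDP a O
      rwa [prob_eq_tsum, prob_eq_tsum] at h
  have hterm : ∀ a : α,
      rp P a * (∑' y, rp (ν a) y * Real.log (rp (ν a) y / rp (P.bind ν) y)) ≤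
      rp P a * (72*ε^2 + 2*δ) + (3/2)*(δ/ε) * (rp P a * Real.log (1 / rp P a)) := by
    intro a
    rcases eq_or_lt_of_le (rp_nonneg P a) with h0 | h0
    · rw [← h0]; simp
    · have h1 := mul_le_mul_of_nonneg_left (key a h0) h0.le
      have h2 : rp P a * (72*ε^2 + 2*δ + (3/2)*(δ/ε) * Real.log (1 / rp P a)) =
          rp P a * (72*ε^2 + 2*δ) + (3/2)*(δ/ε) * (rp P a * Real.log (1 / rp P a)) := by ring
      linarith
  calc ∑ a, rp P a * (∑' y, rp (ν a) y * Real.log (rp (ν a) y / rp (P.bind ν) y))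
      ≤ ∑ a, (rp P a * (72*ε^2 + 2*δ) + (3/2)*(δ/ε) * (rp P a * Real.log (1 / rp P a))) :=
        Finset.sum_le_sum fun a _ => hterm a
    _ = (∑ a, rp P a) * (72*ε^2 + 2*δ) +
          (3/2)*(δ/ε) * ∑ a, rp P a * Real.log (1 / rp P a) := by
        rw [Finset.sum_add_distrib, ← Finset.sum_mul, ← Finset.mul_sum]
    _ ≤ 72 * ε^2 + 2*δ + (3/2) * (δ/ε) * Real.log (Fintype.card α) := by
        rw [sum_rp, one_mul]
        have hent := entropy_le (fun a => rp P a) (rp_nonneg P) (sum_rp P)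
        have h9 : (0:ℝ) ≤ (3/2)*(δ/ε) := by positivity
        have := mul_le_mul_of_nonneg_left hent h9
        linarith

end Core

section Joint

lemma jointPMF_apply (μ : PMF α) (A : α → PMF T) (x : α) (y : T) :
    jointPMF μ A (x, y) = μ x * A x y := by
  rw [jointPMF, PMF.bind_apply]
  rw [tsum_eq_single x ?_]
  · rw [PMF.map_apply]
    rw [tsum_eq_single y ?_]
    · simp
    · intro b hb
      rw [if_neg]
      simp only [Prod.mk.injEq, not_and]
      intro _ h2
      exact hb h2.symm
  · intro b hb
    rw [PMF.map_apply]
    convert mul_zero _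
    refine ENNReal.summable.tsum_eq_zero_iff |>.mpr fun c => ?_
    rw [if_neg]
    simp only [Prod.mk.injEq, not_and]
    intro h1
    exact absurd h1.symm hb

lemma rp_jointPMF (μ : PMF α) (A : α → PMF T) (x : α) (y : T) :
    rp (jointPMF μ A) (x, y) = rp μ x * rp (A x) y := by
  rw [rp, jointPMF_apply, ENNReal.toReal_mul]; rfl

lemma jointPMF_fst (μ : PMF α) (A : α → PMF T) :
    (jointPMF μ A).map Prod.fst = μ := by
  rw [jointPMF, PMF.map_bind]
  have h : ∀ x, PMF.map Prod.fst (PMF.map (fun y => (x, y)) (A x)) = PMF.pure x := by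
    intro x
    rw [PMF.map_comp]
    exact PMF.map_const (A x) x
  simp_rw [h]
  exact PMF.bind_pure μ

lemma jointPMF_snd (μ : PMF α) (A : α → PMF T) :
    (jointPMF μ A).map Prod.snd = μ.bind A := by
  rw [jointPMF, PMF.map_bind]
  have h : ∀ x, PMF.map Prod.snd (PMF.map (fun y => (x, y)) (A x)) = A x := by
    intro x
    rw [PMF.map_comp]
    exact PMF.map_id (A x)
  simp_rw [h]

lemma summable_prod_fintype {γ : Type*} [Fintype γ] {f : γ × T → ℝ}
    (h : ∀ x : γ, Summable (fun y => f (x, y))) : Summable f := by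
  classical
  have hfe : f = fun q => ∑ x : γ, (if q.1 = x then f q else 0) := by
    funext q
    rw [Finset.sum_ite_eq]
    simp
  rw [hfe]
  refine summable_sum fun x _ => ?_
  have hinj : Function.Injective (fun y : T => (x, y)) := by
    intro a b hab
    exact (Prod.mk.injEq _ _ _ _).mp hab |>.2
  refine (hinj.summable_iff ?_).mp ?_
  · intro q hq
    rw [if_neg]
    intro hq1
    exact hq ⟨q.2, by rw [← hq1]⟩
  · exact (h x).congr fun y => by simp

lemma info_formula [Fintype α] (μ : PMF α) (A : α → PMF T) :
    mutualInfoNats (jointPMF μ A) =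
      ∑ x, rp μ x * ∑' y, rp (A x) y * Real.log (rp (A x) y / rp (μ.bind A) y) := by
  classical
  have hpt : ∀ q : α × T,
      (jointPMF μ A q).toReal *
        Real.log ((jointPMF μ A q).toReal /
          ((((jointPMF μ A).map Prod.fst) q.1).toReal *
            (((jointPMF μ A).map Prod.snd) q.2).toReal)) =
      rp μ q.1 * (rp (A q.1) q.2 * Real.log (rp (A q.1) q.2 / rp (μ.bind A) q.2)) := by
    rintro ⟨x, y⟩
    rw [jointPMF_fst, jointPMF_snd]
    have hJ : (jointPMF μ A (x, y)).toReal = rp μ x * rp (A x) y := rp_jointPMF μ A x y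
    rw [hJ]
    rcases eq_or_lt_of_le (rp_nonneg μ x) with h0 | h0
    · rw [← h0]; ring_nf
    · have hr : rp μ x * rp (A x) y / (rp μ x * rp (μ.bind A) y) =
          rp (A x) y / rp (μ.bind A) y := by
        rw [mul_div_mul_left _ _ (ne_of_gt h0)]
      show rp μ x * rp (A x) y * Real.log (rp μ x * rp (A x) y / ((μ x).toReal * ((μ.bind A) y).toReal)) = _
      rw [show (μ x).toReal = rp μ x from rfl, show ((μ.bind A) y).toReal = rp (μ.bind A) y from rfl,
        hr, mul_assoc]
  have hsl : ∀ x : α, Summable (fun y =>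
      rp μ x * (rp (A x) y * Real.log (rp (A x) y / rp (μ.bind A) y))) := by
    intro x
    rcases eq_or_lt_of_le (rp_nonneg μ x) with h0 | h0
    · exact summable_zero.congr fun y => by rw [← h0]; ring
    · exact (klterm_summable (summable_rp _) (summable_rp _) (rp_nonneg _) (rp_nonneg _)
        h0 (rp_le_one _ _) (fun y => rp_bind_ge μ A x y)).mul_left _
  have hsum : Summable (fun q : α × T =>
      rp μ q.1 * (rp (A q.1) q.2 * Real.log (rp (A q.1) q.2 / rp (μ.bind A) q.2))) :=
    summable_prod_fintype fun x => hsl x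
  rw [mutualInfoNats, tsum_congr hpt, Summable.tsum_prod' hsum (fun x => hsl x)]
  rw [tsum_fintype]
  refine Finset.sum_congr rfl fun x _ => ?_
  show ∑' c : T, rp μ x * (rp (A x) c * Real.log (rp (A x) c / rp (μ.bind A) c)) = _
  exact tsum_mul_left

end Joint


section Split

lemma log_split (p q1 q2 : ℝ) (hp : 0 ≤ p) (h1 : 0 < p → 0 < q1) (h2 : 0 < p → 0 < q2) :
    p * Real.log (p / q2) = p * Real.log (p / q1) + p * Real.log (q1 / q2) := by
  rcases eq_or_lt_of_le hp with h0 | h0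
  · rw [← h0]; ring
  · have hq1 := h1 h0
    have hq2 := h2 h0
    rw [← mul_add, ← Real.log_mul (by positivity) (by positivity)]
    congr 2
    field_simp

lemma klterm_summable2 {p q1 q2 : T → ℝ} {w1 w2 : ℝ}
    (hp : Summable p) (hq1 : Summable q1) (hq2 : Summable q2)
    (hpn : ∀ y, 0 ≤ p y) (hq1n : ∀ y, 0 ≤ q1 y) (hq2n : ∀ y, 0 ≤ q2 y)
    (hw1 : 0 < w1) (hw11 : w1 ≤ 1) (hw2 : 0 < w2) (hw21 : w2 ≤ 1)
    (hge1 : ∀ y, w1 * p y ≤ q1 y) (hge2 : ∀ y, w2 * q1 y ≤ q2 y) :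
    Summable (fun y => p y * Real.log (q1 y / q2 y)) := by
  have hgeM : ∀ y, (w2 * w1) * p y ≤ q2 y := by
    intro y
    calc (w2 * w1) * p y = w2 * (w1 * p y) := by ring
      _ ≤ w2 * q1 y := mul_le_mul_of_nonneg_left (hge1 y) hw2.le
      _ ≤ q2 y := hge2 y
  have hS1 : Summable (fun y => p y * Real.log (p y / q1 y)) :=
    klterm_summable hp hq1 hpn hq1n hw1 hw11 hge1
  have hSw : Summable (fun y => p y * Real.log (p y / q2 y)) :=
    klterm_summable hp hq2 hpn hq2n (mul_pos hw2 hw1)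
      (mul_le_one₀ hw21 hw1.le hw11) hgeM
  refine (hSw.sub hS1).congr fun y => ?_
  have := log_split (p y) (q1 y) (q2 y) (hpn y)
    (fun h => lt_of_lt_of_le (mul_pos hw1 h) (hge1 y))
    (fun h => lt_of_lt_of_le (mul_pos (mul_pos hw2 hw1) h) (hgeM y))
  show p y * Real.log (p y / q2 y) - p y * Real.log (p y / q1 y) =
    p y * Real.log (q1 y / q2 y)
  linarith

end Split

section IIDLemmas

variable {X : Type*} [Fintype X]

lemma iid_zero (P : PMF X) : iidPMF P 0 = PMF.pure (fun i : Fin 0 => i.elim0) := rfl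

lemma iid_succ_def (P : PMF X) (n : ℕ) :
    iidPMF P (n+1) = P.bind fun a => (iidPMF P n).map fun x => Fin.cons a x := rfl

lemma iid_succ (P : PMF X) (n : ℕ) (a : X) (r : Fin n → X) :
    iidPMF P (n+1) (Fin.cons a r) = P a * iidPMF P n r := by
  rw [iid_succ_def, PMF.bind_apply]
  rw [tsum_eq_single a ?_]
  · rw [PMF.map_apply, tsum_eq_single r ?_]
    · rw [if_pos rfl]
    · intro b hb
      rw [if_neg]
      rw [Fin.cons_inj]
      rintro ⟨-, h2⟩
      exact hb h2.symm
  · intro b hb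
    rw [PMF.map_apply]
    convert mul_zero _
    refine ENNReal.summable.tsum_eq_zero_iff |>.mpr fun c => ?_
    rw [if_neg]
    rw [Fin.cons_inj]
    rintro ⟨h1, -⟩
    exact hb h1.symm

lemma rp_iid_succ (P : PMF X) (n : ℕ) (a : X) (r : Fin n → X) :
    rp (iidPMF P (n+1)) (Fin.cons a r) = rp P a * rp (iidPMF P n) r := by
  rw [rp, iid_succ, ENNReal.toReal_mul]; rfl

lemma iid_bind_eq {T : Type*} (P : PMF X) (n : ℕ) (A : (Fin (n+1) → X) → PMF T) :
    (iidPMF P (n+1)).bind A =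
      (iidPMF P n).bind (fun r => P.bind (fun a => A (Fin.cons a r))) := by
  rw [iid_succ_def, PMF.bind_bind]
  have h1 : ∀ a, ((iidPMF P n).map fun x => Fin.cons a x).bind A =
      (iidPMF P n).bind fun r => A (Fin.cons a r) := by
    intro a
    rw [PMF.bind_map]
    rfl
  simp_rw [h1]
  exact PMF.bind_comm P (iidPMF P n) fun a r => A (Fin.cons a r)

lemma neighbor_cons_left {n : ℕ} (a a' : X) (r : Fin n → X) :
    Neighbor (Fin.cons a r) (Fin.cons a' r) := by
  refine ⟨0, fun j hj => ?_⟩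
  induction j using Fin.cases with
  | zero => exact absurd rfl hj
  | succ k => rw [Fin.cons_succ, Fin.cons_succ]

lemma neighbor_cons_right {n : ℕ} {r r' : Fin n → X} (h : Neighbor r r') (a : X) :
    Neighbor (Fin.cons a r) (Fin.cons a r') := by
  obtain ⟨i, hi⟩ := h
  refine ⟨i.succ, fun j hj => ?_⟩
  induction j using Fin.cases with
  | zero => rw [Fin.cons_zero, Fin.cons_zero]
  | succ k =>
    rw [Fin.cons_succ, Fin.cons_succ]
    exact hi k fun hk => hj (by rw [hk])

lemma dp_bind {n : ℕ} {T : Type*} (P : PMF X) (A : (Fin (n+1) → X) → PMF T) {ε δ : ℝ}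
    (hDP : DiffPrivate A ε δ) :
    DiffPrivate (fun r : Fin n → X => P.bind fun a => A (Fin.cons a r)) ε δ := by
  intro r r' hn O
  show prob (P.bind fun a => A (Fin.cons a r)) O ≤
    Real.exp ε * prob (P.bind fun a => A (Fin.cons a r')) O + δ
  rw [prob_bind, prob_bind]
  have hs := sum_rp P
  calc ∑ a, rp P a * prob (A (Fin.cons a r)) O
      ≤ ∑ a, rp P a * (Real.exp ε * prob (A (Fin.cons a r')) O + δ) :=
        Finset.sum_le_sum fun a _ => mul_le_mul_of_nonneg_left
          (hDP _ _ (neighbor_cons_right hn a) O) (rp_nonneg _ _)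
    _ = Real.exp ε * (∑ a, rp P a * prob (A (Fin.cons a r')) O) + (∑ a, rp P a) * δ := by
        rw [Finset.mul_sum, Finset.sum_mul, ← Finset.sum_add_distrib]
        exact Finset.sum_congr rfl fun b _ => by ring
    _ = _ := by rw [hs, one_mul]

end IIDLemmas


section Main

set_option maxHeartbeats 1000000 in
lemma main_bound {X : Type*} [Fintype X] {T : Type*} (P : PMF X) {ε δ : ℝ}
    (hε : 0 < ε) (hε2 : ε ≤ 1/2) (hδ : 0 ≤ δ) :
    ∀ (n : ℕ) (A : (Fin n → X) → PMF T), DiffPrivate A ε δ →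
      mutualInfoNats (jointPMF (iidPMF P n) A) ≤
        (n : ℝ) * (72*ε^2 + 2*δ + (3/2)*(δ/ε) * Real.log (Fintype.card X)) := by
  intro n
  induction n with
  | zero =>
    intro A _
    rw [info_formula]
    have hz : ∀ x : Fin 0 → X,
        rp (iidPMF P 0) x * (∑' y, rp (A x) y *
          Real.log (rp (A x) y / rp ((iidPMF P 0).bind A) y)) = 0 := by
      intro x
      have hbind : (iidPMF P 0).bind A = A x := by
        rw [iid_zero, PMF.pure_bind]
        congr 1
        funext i
        exact i.elim0
      have hzz : ∀ y, rp (A x) y * Real.log (rp (A x) y / rp ((iidPMF P 0).bind A) y) = 0 := by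
        intro y
        rw [hbind]
        rcases eq_or_lt_of_le (rp_nonneg (A x) y) with h | h
        · rw [← h]; ring
        · rw [div_self (ne_of_gt h), Real.log_one, mul_zero]
      rw [tsum_congr hzz, tsum_zero, mul_zero]
    rw [Finset.sum_congr rfl fun x _ => hz x]
    simp
  | succ n ih =>
    intro A hA
    set μn := iidPMF P n with hμn
    set B : (Fin n → X) → PMF T := fun r => P.bind fun a => A (Fin.cons a r) with hB
    set κ : ℝ := 72*ε^2 + 2*δ + (3/2)*(δ/ε) * Real.log (Fintype.card X) with hκ
    have hMeq : (iidPMF P (n+1)).bind A = μn.bind B := by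
      rw [hμn, hB]
      exact iid_bind_eq P n A
    rw [info_formula, hMeq]
    -- abbreviations for readability
    have hge1 : ∀ (a : X) (r : Fin n → X) (y : T),
        rp P a * rp (A (Fin.cons a r)) y ≤ rp (B r) y := by
      intro a r y
      have h := rp_bind_ge P (fun a' => A (Fin.cons a' r)) a y
      exact h
    have hge2 : ∀ (r : Fin n → X) (y : T),
        rp μn r * rp (B r) y ≤ rp (μn.bind B) y := fun r y => rp_bind_ge μn B r y
    -- the weighted chain-rule split of each term
    have hsplitTerm : ∀ (a : X) (r : Fin n → X),
        rp P a * rp μn r * (∑' y, rp (A (Fin.cons a r)) y *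
            Real.log (rp (A (Fin.cons a r)) y / rp (μn.bind B) y)) =
        rp μn r * (rp P a * (∑' y, rp (A (Fin.cons a r)) y *
            Real.log (rp (A (Fin.cons a r)) y / rp (B r) y)))
        + rp μn r * (∑' y, rp P a * (rp (A (Fin.cons a r)) y *
            Real.log (rp (B r) y / rp (μn.bind B) y))) := by
      intro a r
      rcases eq_or_lt_of_le (rp_nonneg P a) with ha | ha
      · rw [← ha]
        simp
      rcases eq_or_lt_of_le (rp_nonneg μn r) with hr | hr
      · rw [← hr]
        simp
      have hgeM : ∀ y, (rp μn r * rp P a) * rp (A (Fin.cons a r)) y ≤ rp (μn.bind B) y := by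
        intro y
        calc (rp μn r * rp P a) * rp (A (Fin.cons a r)) y
            = rp μn r * (rp P a * rp (A (Fin.cons a r)) y) := by ring
          _ ≤ rp μn r * rp (B r) y :=
              mul_le_mul_of_nonneg_left (hge1 a r y) (rp_nonneg _ _)
          _ ≤ _ := hge2 r y
      have hid : ∀ y, rp (A (Fin.cons a r)) y *
          Real.log (rp (A (Fin.cons a r)) y / rp (μn.bind B) y) =
          rp (A (Fin.cons a r)) y * Real.log (rp (A (Fin.cons a r)) y / rp (B r) y) +
          rp (A (Fin.cons a r)) y * Real.log (rp (B r) y / rp (μn.bind B) y) := by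
        intro y
        exact log_split _ _ _ (rp_nonneg _ _)
          (fun h => lt_of_lt_of_le (mul_pos ha h) (hge1 a r y))
          (fun h => lt_of_lt_of_le (mul_pos (mul_pos hr ha) h) (hgeM y))
      have hS1 : Summable (fun y => rp (A (Fin.cons a r)) y *
          Real.log (rp (A (Fin.cons a r)) y / rp (B r) y)) :=
        klterm_summable (summable_rp _) (summable_rp _) (rp_nonneg _) (rp_nonneg _)
          ha (rp_le_one _ _) (hge1 a r)
      have hS2 : Summable (fun y => rp (A (Fin.cons a r)) y *
          Real.log (rp (B r) y / rp (μn.bind B) y)) :=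
        klterm_summable2 (summable_rp _) (summable_rp _) (summable_rp _)
          (rp_nonneg _) (rp_nonneg _) (rp_nonneg _)
          ha (rp_le_one _ _) hr (rp_le_one _ _) (hge1 a r) (hge2 r)
      rw [tsum_congr hid, Summable.tsum_add hS1 hS2]
      have h2 : (∑' y, rp P a * (rp (A (Fin.cons a r)) y *
          Real.log (rp (B r) y / rp (μn.bind B) y))) =
          rp P a * ∑' y, rp (A (Fin.cons a r)) y *
            Real.log (rp (B r) y / rp (μn.bind B) y) := tsum_mul_left
      rw [h2]
      ring
    -- reindex the sum over datasets
    have step1 : ∑ x : Fin (n+1) → X, rp (iidPMF P (n+1)) x *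
          ∑' y, rp (A x) y * Real.log (rp (A x) y / rp (μn.bind B) y)
        = ∑ z : X × (Fin n → X), rp (iidPMF P (n+1)) (Fin.cons z.1 z.2) *
          ∑' y, rp (A (Fin.cons z.1 z.2)) y *
            Real.log (rp (A (Fin.cons z.1 z.2)) y / rp (μn.bind B) y) :=
      (Fintype.sum_equiv (Fin.consEquiv (fun _ => X))
        (fun z : X × (Fin n → X) => rp (iidPMF P (n+1)) (Fin.cons z.1 z.2) *
          ∑' y, rp (A (Fin.cons z.1 z.2)) y *
            Real.log (rp (A (Fin.cons z.1 z.2)) y / rp (μn.bind B) y))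
        (fun x => rp (iidPMF P (n+1)) x *
          ∑' y, rp (A x) y * Real.log (rp (A x) y / rp (μn.bind B) y))
        (fun z => rfl)).symm
    rw [step1, Fintype.sum_prod_type]
    have step3 : ∀ (a : X) (r : Fin n → X),
        rp (iidPMF P (n+1)) (Fin.cons a r) *
          ∑' y, rp (A (Fin.cons a r)) y *
            Real.log (rp (A (Fin.cons a r)) y / rp (μn.bind B) y)
        = rp μn r * (rp P a * (∑' y, rp (A (Fin.cons a r)) y *
            Real.log (rp (A (Fin.cons a r)) y / rp (B r) y)))
          + rp μn r * (∑' y, rp P a * (rp (A (Fin.cons a r)) y *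
            Real.log (rp (B r) y / rp (μn.bind B) y))) := by
      intro a r
      rw [rp_iid_succ, hμn]
      rw [← hμn]
      exact hsplitTerm a r
    rw [Finset.sum_congr rfl fun a _ => Finset.sum_congr rfl fun r _ => step3 a r]
    rw [Finset.sum_congr rfl fun a _ => Finset.sum_add_distrib, Finset.sum_add_distrib]
    -- first sum: conditional term, bounded by core
    have hcore : ∀ r : Fin n → X,
        ∑ a, rp P a * (∑' y, rp (A (Fin.cons a r)) y *
          Real.log (rp (A (Fin.cons a r)) y / rp (B r) y)) ≤ κ := by
      intro r
      have h := core P (fun a => A (Fin.cons a r)) hε hε2 hδ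
        (fun a b O => hA _ _ (neighbor_cons_left a b r) O)
      simp only [hB, hκ]
      exact h
    have hfirst : ∑ a, ∑ r, rp μn r * (rp P a * (∑' y, rp (A (Fin.cons a r)) y *
        Real.log (rp (A (Fin.cons a r)) y / rp (B r) y))) ≤ κ := by
      rw [Finset.sum_comm]
      calc ∑ r, ∑ a, rp μn r * (rp P a * (∑' y, rp (A (Fin.cons a r)) y *
            Real.log (rp (A (Fin.cons a r)) y / rp (B r) y)))
          = ∑ r, rp μn r * ∑ a, rp P a * (∑' y, rp (A (Fin.cons a r)) y *
            Real.log (rp (A (Fin.cons a r)) y / rp (B r) y)) := by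
            exact Finset.sum_congr rfl fun r _ => by rw [Finset.mul_sum]
        _ ≤ ∑ r, rp μn r * κ :=
            Finset.sum_le_sum fun r _ =>
              mul_le_mul_of_nonneg_left (hcore r) (rp_nonneg _ _)
        _ = κ := by rw [← Finset.sum_mul, sum_rp, one_mul]
    -- second sum: equals the mutual information of the marginal mechanism
    have hsum2 : ∀ r : Fin n → X,
        ∑ a, rp μn r * (∑' y, rp P a * (rp (A (Fin.cons a r)) y *
          Real.log (rp (B r) y / rp (μn.bind B) y)))
        = rp μn r * (∑' y, rp (B r) y * Real.log (rp (B r) y / rp (μn.bind B) y)) := by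
      intro r
      rcases eq_or_lt_of_le (rp_nonneg μn r) with hr | hr
      · rw [← hr]; simp
      rw [← Finset.mul_sum]
      congr 1
      have hsummand : ∀ a : X, Summable (fun y => rp P a * (rp (A (Fin.cons a r)) y *
          Real.log (rp (B r) y / rp (μn.bind B) y))) := by
        intro a
        rcases eq_or_lt_of_le (rp_nonneg P a) with ha | ha
        · exact summable_zero.congr fun y => by rw [← ha]; ring
        · exact (klterm_summable2 (summable_rp _) (summable_rp _) (summable_rp _)
            (rp_nonneg _) (rp_nonneg _) (rp_nonneg _)
            ha (rp_le_one _ _) hr (rp_le_one _ _) (hge1 a r) (hge2 r)).mul_left _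
      rw [← Summable.tsum_finsetSum (fun a _ => hsummand a)]
      refine tsum_congr fun y => ?_
      have hb : rp (B r) y = ∑ a, rp P a * rp (A (Fin.cons a r)) y := by
        simp only [hB]
        exact rp_bind P _ y
      calc ∑ a, rp P a * (rp (A (Fin.cons a r)) y *
            Real.log (rp (B r) y / rp (μn.bind B) y))
          = (∑ a, rp P a * rp (A (Fin.cons a r)) y) *
            Real.log (rp (B r) y / rp (μn.bind B) y) := by
            rw [Finset.sum_mul]
            exact Finset.sum_congr rfl fun a _ => by ring
        _ = rp (B r) y * Real.log (rp (B r) y / rp (μn.bind B) y) := by rw [← hb]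
    have hih : mutualInfoNats (jointPMF μn B) ≤ (n : ℝ) * κ := by
      have hdp : DiffPrivate B ε δ := by
        simp only [hB]
        exact dp_bind P A hA
      have h := ih B hdp
      rw [hμn, hκ]
      exact h
    have hsecond : ∑ a, ∑ r, rp μn r * (∑' y, rp P a * (rp (A (Fin.cons a r)) y *
        Real.log (rp (B r) y / rp (μn.bind B) y))) ≤ (n : ℝ) * κ := by
      rw [Finset.sum_comm]
      rw [Finset.sum_congr rfl fun r _ => hsum2 r]
      rw [← info_formula μn B]
      exact hih
    have hcast : ((n+1 : ℕ) : ℝ) * κ = κ + (n : ℝ) * κ := by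
      push_cast
      ring
    rw [hcast]
    exact add_le_add hfirst hsecond

end Main

end DPMI

set_option maxHeartbeats 2000000 in
/-- There exist absolute constants `c₁, c₂, C > 0` such that: for every finite
data domain `X`, every `(ε,δ)`-differentially private algorithm `A : X^n → T`, and `X ∼ P^n`,
if `ε ∈ (0,1/2]`, `ε ≥ c₁/√n` and `δ ≤ c₂·ε/n²`, then
`I(X; A(X)) ≤ C·(n·ε² + n·√(δ/ε)·(1 + ln((1/n)·√(ε/δ)) + n·log₂|X|))`. -/
theorem stmt_4 : ∃ c₁ c₂ C : ℝ, 0 < c₁ ∧ 0 < c₂ ∧ 0 < C ∧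
    ∀ (X T : Type) [Fintype X] (n : ℕ) (A : (Fin n → X) → PMF T) (ε δ : ℝ),
      DiffPrivate A ε δ → 0 < ε → ε ≤ 1 / 2 → c₁ / Real.sqrt n ≤ ε →
      0 ≤ δ → δ ≤ c₂ * ε / (n : ℝ) ^ 2 →
      ∀ P : PMF X,
        mutualInfoNats (jointPMF (iidPMF P n) A) ≤
          C * ((n : ℝ) * ε ^ 2 +
            (n : ℝ) * Real.sqrt (δ / ε) *
              (1 + Real.log ((1 / (n : ℝ)) * Real.sqrt (ε / δ)) +
                (n : ℝ) * Real.logb 2 (Fintype.card X))) := by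
  refine ⟨1, 1, 72, one_pos, one_pos, by norm_num, ?_⟩
  intro X T _inst n A ε δ hDP hε hε2 _hc1 hδ hδ2 P
  have hmain := DPMI.main_bound P hε hε2 hδ n A hDP
  have hXne : Nonempty X := by
    by_contra hco
    rw [not_nonempty_iff] at hco
    have h1 := P.tsum_coe
    rw [tsum_empty] at h1
    simp at h1
  have hc1 : (1:ℝ) ≤ (Fintype.card X : ℝ) := by
    have := Fintype.card_pos_iff.mpr hXne
    exact_mod_cast this
  have hlnX0 : 0 ≤ Real.log (Fintype.card X) := Real.log_nonneg hc1
  have hY0 : 0 ≤ Real.logb 2 (Fintype.card X) := Real.logb_nonneg (by norm_num) hc1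
  rcases Nat.eq_zero_or_pos n with hn0 | hn
  · subst hn0
    have h0 : mutualInfoNats (jointPMF (iidPMF P 0) A) ≤ 0 := by simpa using hmain
    refine le_trans h0 ?_
    simp
  · have hn1 : (1:ℝ) ≤ (n:ℝ) := by exact_mod_cast hn
    have hn0' : (0:ℝ) < (n:ℝ) := by linarith
    have hδε1 : δ/ε ≤ 1 := by
      rw [div_le_one hε]
      have h3 := mul_le_mul_of_nonneg_right hδ2 (show (0:ℝ) ≤ (n:ℝ)^2 by positivity)
      have h4 : 1 * ε / (n:ℝ)^2 * (n:ℝ)^2 = ε := by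
        field_simp
      rw [h4] at h3
      have hn2 : (1:ℝ) ≤ (n:ℝ)^2 := by nlinarith
      nlinarith [mul_nonneg hδ (sub_nonneg.mpr hn2)]
    have hs0 : 0 ≤ Real.sqrt (δ/ε) := Real.sqrt_nonneg _
    have hsqq : Real.sqrt (δ/ε)^2 = δ/ε := Real.sq_sqrt (div_nonneg hδ hε.le)
    have hs1 : Real.sqrt (δ/ε) ≤ 1 := by
      nlinarith [sq_nonneg (Real.sqrt (δ/ε) - 1)]
    have hsq : δ/ε ≤ Real.sqrt (δ/ε) := by
      nlinarith [mul_nonneg hs0 (sub_nonneg.mpr hs1)]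
    have hδs : δ ≤ Real.sqrt (δ/ε) := by
      have h5 : δ ≤ δ/ε := by
        rw [le_div_iff₀ hε]
        nlinarith
      linarith
    have hL : 0 ≤ Real.log ((1 / (n : ℝ)) * Real.sqrt (ε / δ)) := by
      rcases eq_or_lt_of_le hδ with h0 | h0
      · rw [← h0]
        simp
      · apply Real.log_nonneg
        have h1 : (n:ℝ)^2 ≤ ε/δ := by
          rw [le_div_iff₀ h0]
          have h3 := mul_le_mul_of_nonneg_right hδ2 (show (0:ℝ) ≤ (n:ℝ)^2 by positivity)
          have h4 : 1 * ε / (n:ℝ)^2 * (n:ℝ)^2 = ε := by field_simp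
          rw [h4] at h3
          nlinarith
        have h2 : (n:ℝ) ≤ Real.sqrt (ε/δ) := by
          have h6 := Real.sqrt_le_sqrt h1
          rwa [Real.sqrt_sq hn0'.le] at h6
        rw [show (1/(n:ℝ)) * Real.sqrt (ε/δ) = Real.sqrt (ε/δ) / (n:ℝ) by ring,
          le_div_iff₀ hn0']
        linarith
    have hlogX : Real.log (Fintype.card X) ≤ (n:ℝ) * Real.logb 2 (Fintype.card X) := by
      have hlog2 : Real.log ((Fintype.card X : ℝ)) ≤ Real.logb 2 (Fintype.card X) := by
        rw [Real.logb, le_div_iff₀ (Real.log_pos (by norm_num))]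
        have hl2 : Real.log 2 ≤ 1 := by
          have := Real.log_le_sub_one_of_pos (show (0:ℝ) < 2 by norm_num)
          linarith
        nlinarith
      nlinarith
    -- assemble
    have hKY : (δ/ε) * Real.log (Fintype.card X) ≤
        Real.sqrt (δ/ε) * ((n:ℝ) * Real.logb 2 (Fintype.card X)) :=
      mul_le_mul hsq hlogX hlnX0 hs0
    have hnY0 : 0 ≤ (n:ℝ) * Real.logb 2 (Fintype.card X) := mul_nonneg hn0'.le hY0
    have hb : (1:ℝ) ≤ 1 + Real.log ((1 / (n : ℝ)) * Real.sqrt (ε / δ)) +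
        (n:ℝ) * Real.logb 2 (Fintype.card X) := by linarith
    have hbr0 : (0:ℝ) ≤ 1 + Real.log ((1 / (n : ℝ)) * Real.sqrt (ε / δ)) +
        (n:ℝ) * Real.logb 2 (Fintype.card X) := by linarith
    have hsb : Real.sqrt (δ/ε) * ((n:ℝ) * Real.logb 2 (Fintype.card X)) ≤
        Real.sqrt (δ/ε) * (1 + Real.log ((1 / (n : ℝ)) * Real.sqrt (ε / δ)) +
          (n:ℝ) * Real.logb 2 (Fintype.card X)) :=
      mul_le_mul_of_nonneg_left (by linarith) hs0
    have hss : Real.sqrt (δ/ε) * 1 ≤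
        Real.sqrt (δ/ε) * (1 + Real.log ((1 / (n : ℝ)) * Real.sqrt (ε / δ)) +
          (n:ℝ) * Real.logb 2 (Fintype.card X)) :=
      mul_le_mul_of_nonneg_left hb hs0
    have hx0 : (0:ℝ) ≤ Real.sqrt (δ/ε) * (1 + Real.log ((1 / (n : ℝ)) * Real.sqrt (ε / δ)) +
        (n:ℝ) * Real.logb 2 (Fintype.card X)) := mul_nonneg hs0 hbr0
    have hκb : 72*ε^2 + 2*δ + (3/2)*(δ/ε) * Real.log (Fintype.card X) ≤
        72 * (ε^2 + Real.sqrt (δ/ε) * (1 + Real.log ((1 / (n : ℝ)) * Real.sqrt (ε / δ)) +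
          (n:ℝ) * Real.logb 2 (Fintype.card X))) := by
      nlinarith
    calc mutualInfoNats (jointPMF (iidPMF P n) A)
        ≤ (n:ℝ) * (72*ε^2 + 2*δ + (3/2)*(δ/ε) * Real.log (Fintype.card X)) := hmain
      _ ≤ (n:ℝ) * (72 * (ε^2 + Real.sqrt (δ/ε) *
            (1 + Real.log ((1 / (n : ℝ)) * Real.sqrt (ε / δ)) +
              (n:ℝ) * Real.logb 2 (Fintype.card X)))) :=
          mul_le_mul_of_nonneg_left hκb hn0'.le
      _ = 72 * ((n : ℝ) * ε ^ 2 +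
            (n : ℝ) * Real.sqrt (δ / ε) *
              (1 + Real.log ((1 / (n : ℝ)) * Real.sqrt (ε / δ)) +
                (n : ℝ) * Real.logb 2 (Fintype.card X))) := by ring
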